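/- Let d be a differential of degree 1 and δ a differential of degree −1 on E such that [d,δ] = d∘δ + δ∘d is invertible. Then [d,δ]⁻¹ commutes with both d and δ; the endomorphism T = [d,δ]⁻¹∘δ satisfies d∘T + T∘d = id (so T is a homotopy for d); d restricts to a linear bijection from range δ onto range d; and δ restricts to a linear bijection from range d onto range δ. (Claims established in and after the proof of Proposition 2.7.) -/
import Mathlib


/- STATEMENT 5: If `[d,δ] = d∘δ + δ∘d` is invertible (with two-sided inverse `ginv`), then
the inverse commutes with `d` and `δ`, `T = [d,δ]⁻¹ ∘ δ` is a homotopy for `d`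
(`d∘T + T∘d = id`), `d` restricts to a bijection `range δ → range d`, and `δ` restricts to a
bijection `range d → range δ`.

`E` is modelled as a finite-dimensional complex vector space `V` together with a family of
projections `π i` (idempotent, mutually orthogonal, supported in `[p, q]`, summing to `1`),
whose ranges are the graded pieces `E^i`.  An endomorphism `a` has degree `k` iff
`a * π i = π (i + k) * a` for all `i`. -/
theorem stmt5 {V : Type} [AddCommGroup V] [Module ℂ V] [FiniteDimensional ℂ V]
    (p q : ℤ) (hpq : p ≤ q) (π : ℤ → Module.End ℂ V)
    (hidem : ∀ i, π i * π i = π i)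
    (horth : ∀ i j, i ≠ j → π i * π j = 0)
    (hsupp : ∀ i, i ∉ Finset.Icc p q → π i = 0)
    (hsum : ∑ i ∈ Finset.Icc p q, π i = 1)
    (d δ : Module.End ℂ V)
    (hd : ∀ i, d * π i = π (i + 1) * d)
    (hδ : ∀ i, δ * π i = π (i - 1) * δ)
    (hdd : d * d = 0)
    (hδδ : δ * δ = 0)
    (ginv : Module.End ℂ V)
    (hginv₁ : ginv * (d * δ + δ * d) = 1)
    (hginv₂ : (d * δ + δ * d) * ginv = 1) :
    ginv * d = d * ginv ∧
    ginv * δ = δ * ginv ∧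
    d * (ginv * δ) + (ginv * δ) * d = 1 ∧
    Set.BijOn (⇑d) (LinearMap.range δ : Set V) (LinearMap.range d : Set V) ∧
    Set.BijOn (⇑δ) (LinearMap.range d : Set V) (LinearMap.range δ : Set V) := by
  have hdg : d * (d * δ + δ * d) = (d * δ + δ * d) * d := by
    rw [mul_add, add_mul, ← mul_assoc d d δ, hdd, zero_mul, zero_add,
      mul_assoc δ d d, hdd, mul_zero, add_zero, mul_assoc]
  have hδg : δ * (d * δ + δ * d) = (d * δ + δ * d) * δ := by
    rw [mul_add, add_mul, ← mul_assoc δ δ d, hδδ, zero_mul, add_zero,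
      mul_assoc d δ δ, hδδ, mul_zero, zero_add, ← mul_assoc]
  have hcd : ginv * d = d * ginv := by
    calc ginv * d = ginv * d * ((d * δ + δ * d) * ginv) := by rw [hginv₂, mul_one]
      _ = ginv * (d * (d * δ + δ * d)) * ginv := by noncomm_ring
      _ = ginv * ((d * δ + δ * d) * d) * ginv := by rw [hdg]
      _ = ginv * (d * δ + δ * d) * (d * ginv) := by noncomm_ring
      _ = d * ginv := by rw [hginv₁, one_mul]
  have hcδ : ginv * δ = δ * ginv := by
    calc ginv * δ = ginv * δ * ((d * δ + δ * d) * ginv) := by rw [hginv₂, mul_one]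
      _ = ginv * (δ * (d * δ + δ * d)) * ginv := by noncomm_ring
      _ = ginv * ((d * δ + δ * d) * δ) * ginv := by rw [hδg]
      _ = ginv * (d * δ + δ * d) * (δ * ginv) := by noncomm_ring
      _ = δ * ginv := by rw [hginv₁, one_mul]
  have hhom : d * (ginv * δ) + (ginv * δ) * d = 1 := by
    calc d * (ginv * δ) + (ginv * δ) * d
        = (d * ginv) * δ + ginv * (δ * d) := by noncomm_ring
      _ = (ginv * d) * δ + ginv * (δ * d) := by rw [hcd]
      _ = ginv * (d * δ + δ * d) := by noncomm_ring
      _ = 1 := hginv₁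
  have hhom' : δ * (ginv * d) + (ginv * d) * δ = 1 := by
    calc δ * (ginv * d) + (ginv * d) * δ
        = (δ * ginv) * d + ginv * (d * δ) := by noncomm_ring
      _ = (ginv * δ) * d + ginv * (d * δ) := by rw [hcδ]
      _ = ginv * (d * δ + δ * d) := by noncomm_ring
      _ = 1 := hginv₁
  -- pointwise versions
  have H1 : ∀ x : V, d (ginv (δ x)) + ginv (δ (d x)) = x := by
    intro x
    have := LinearMap.ext_iff.mp hhom x
    simpa [Module.End.mul_apply] using this
  have H2 : ∀ x : V, δ (ginv (d x)) + ginv (d (δ x)) = x := by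
    intro x
    have := LinearMap.ext_iff.mp hhom' x
    simpa [Module.End.mul_apply] using this
  have hcdpt : ∀ x : V, ginv (d x) = d (ginv x) := by
    intro x; have := LinearMap.ext_iff.mp hcd x; simpa [Module.End.mul_apply] using this
  have hcδpt : ∀ x : V, ginv (δ x) = δ (ginv x) := by
    intro x; have := LinearMap.ext_iff.mp hcδ x; simpa [Module.End.mul_apply] using this
  have hddpt : ∀ x : V, d (d x) = 0 := by
    intro x; have := LinearMap.ext_iff.mp hdd x; simpa [Module.End.mul_apply] using this
  have hδδpt : ∀ x : V, δ (δ x) = 0 := by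
    intro x; have := LinearMap.ext_iff.mp hδδ x; simpa [Module.End.mul_apply] using this
  refine ⟨hcd, hcδ, hhom, ?_, ?_⟩
  · refine ⟨?_, ?_, ?_⟩
    · rintro x -
      exact ⟨x, rfl⟩
    · rintro x ⟨a, rfl⟩ y ⟨b, rfl⟩ hxy
      have h1 : δ a = ginv (δ (d (δ a))) := by
        have := H1 (δ a)
        rw [hδδpt, map_zero, map_zero, zero_add] at this
        exact this.symm
      have h2 : δ b = ginv (δ (d (δ b))) := by
        have := H1 (δ b)
        rw [hδδpt, map_zero, map_zero, zero_add] at this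
        exact this.symm
      rw [h1, h2, hxy]
    · rintro z ⟨w, rfl⟩
      refine ⟨δ (ginv (d w)), ⟨ginv (d w), rfl⟩, ?_⟩
      have := H1 (d w)
      rw [hddpt, map_zero, map_zero, add_zero, hcδpt] at this
      exact this
  · refine ⟨?_, ?_, ?_⟩
    · rintro x -
      exact ⟨x, rfl⟩
    · rintro x ⟨a, rfl⟩ y ⟨b, rfl⟩ hxy
      have h1 : d a = ginv (d (δ (d a))) := by
        have := H2 (d a)
        rw [hddpt, map_zero, map_zero, zero_add] at this
        exact this.symm
      have h2 : d b = ginv (d (δ (d b))) := by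
        have := H2 (d b)
        rw [hddpt, map_zero, map_zero, zero_add] at this
        exact this.symm
      rw [h1, h2, hxy]
    · rintro z ⟨w, rfl⟩
      refine ⟨d (ginv (δ w)), ⟨ginv (δ w), rfl⟩, ?_⟩
      have := H2 (δ w)
      rw [hδδpt, map_zero, map_zero, add_zero, hcdpt] at this
      exact this
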